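/- arXiv:2305.02872 — 2 statements merged into one kernel-verified Lean document; each statement's English description precedes it below -/
import Mathlib

section
/- If φ : X_p → X_q is a finitary isomorphism with finite expectation, then m_φ(x) < ∞ for μ_p-a.e. x ∈ X_p; that is, for a.e. x there exists M ∈ ℕ such that r_φ(g⁻¹·x) ≤ |g| + M for every g ∈ W_a. -/
open MeasureTheory ProbabilityTheory Filter

namespace Finitary

/-- The free group `F_ℓ` on `ℓ` generators. -/
abbrev FG (ℓ : ℕ) := FreeGroup (Fin ℓ)

instance {ℓ : ℕ} : Countable (FG ℓ) := FreeGroup.toWord_injective.countable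

/-- The word length on the free group. -/
noncomputable def wl {ℓ : ℕ} (g : FG ℓ) : ℕ := FreeGroup.norm g

/-- The ball `B(r)` of radius `r` centered at the identity. -/
def ball (ℓ r : ℕ) : Set (FG ℓ) := {g | wl g ≤ r}

/-- `W_a`: the set of reduced words ending in the generator `a`, together with the identity. -/
def Wa {ℓ : ℕ} (a : Fin ℓ) : Set (FG ℓ) :=
  {g | g = 1 ∨ wl g = wl (g * (FreeGroup.of a)⁻¹) + 1}

/-- The configuration space `X_p = {1,…,m}^{F_ℓ}`. -/
abbrev Conf (ℓ m : ℕ) := FG ℓ → Fin m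

/-- The shift action `(g·x)_h = x_{g⁻¹h}`. -/
def shift {ℓ m : ℕ} (g : FG ℓ) (x : Conf ℓ m) : Conf ℓ m := fun h => x (g⁻¹ * h)

/-- `μ` is the Bernoulli product measure on `X_p` with marginal weights `P`:
every cylinder set has measure equal to the product of the weights of its fixed symbols. -/
def IsBernoulli {ℓ m : ℕ} (P : Fin m → ℝ) (μ : Measure (Conf ℓ m)) : Prop :=
  IsProbabilityMeasure μ ∧
    ∀ (A : Finset (FG ℓ)) (σ : FG ℓ → Fin m),
      (μ {x | ∀ g ∈ A, x g = σ g}).toReal = ∏ g ∈ A, P (σ g)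

/-- The set of radii `r` such that the ball `B(r)` determines `φ(x)_e`. -/
def codeSet {ℓ m n : ℕ} (φ : Conf ℓ m → Conf ℓ n) (x : Conf ℓ m) : Set ℕ :=
  {r | ∀ x' : Conf ℓ m, (∀ g ∈ ball ℓ r, x' g = x g) → φ x' 1 = φ x 1}

/-- `r_φ(x)`: the least radius of a ball determining `φ(x)_e`. -/
noncomputable def rphi {ℓ m n : ℕ} (φ : Conf ℓ m → Conf ℓ n) (x : Conf ℓ m) : ℕ :=
  sInf (codeSet φ x)

/-- `v_φ(x) = |B(r_φ(x))|`. -/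
noncomputable def vphi {ℓ m n : ℕ} (φ : Conf ℓ m → Conf ℓ n) (x : Conf ℓ m) : ℕ :=
  (ball ℓ (rphi φ x)).ncard

/-- A finitary coding: a measurable, equivariant, measure-preserving map which is
a.e. finitarily determined at the identity coordinate (i.e. continuous off a null set). -/
structure IsFinitaryCoding {ℓ m n : ℕ} (μp : Measure (Conf ℓ m)) (μq : Measure (Conf ℓ n))
    (φ : Conf ℓ m → Conf ℓ n) : Prop where
  measurable : Measurable φ
  measurePreserving : MeasurePreserving φ μp μq
  equivariant : ∀ g : FG ℓ, ∀ᵐ x ∂μp, φ (shift g x) = shift g (φ x)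
  finitary : ∀ᵐ x ∂μp, (codeSet φ x).Nonempty

/-- A finitary isomorphism: a pair of mutually inverse (mod null sets) finitary codings. -/
structure IsFinitaryIso {ℓ m n : ℕ} (μp : Measure (Conf ℓ m)) (μq : Measure (Conf ℓ n))
    (φ : Conf ℓ m → Conf ℓ n) (ψ : Conf ℓ n → Conf ℓ m) : Prop where
  toCoding : IsFinitaryCoding μp μq φ
  invCoding : IsFinitaryCoding μq μp ψ
  leftInv : ∀ᵐ x ∂μp, ψ (φ x) = x
  rightInv : ∀ᵐ y ∂μq, φ (ψ y) = y

/-- Finite expectation of code volume: `∫ v_φ dμ_p < ∞` and `∫ v_{φ⁻¹} dμ_q < ∞`. -/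
def FiniteExpectation {ℓ m n : ℕ} (μp : Measure (Conf ℓ m)) (μq : Measure (Conf ℓ n))
    (φ : Conf ℓ m → Conf ℓ n) (ψ : Conf ℓ n → Conf ℓ m) : Prop :=
  (∫⁻ x, (vphi φ x : ENNReal) ∂μp) < ⊤ ∧ (∫⁻ y, (vphi ψ y : ENNReal) ∂μq) < ⊤

/-- The sub-σ-algebra generated by the coordinate maps `x ↦ x_g`, `g ∈ S`. -/
def coordAlg {ℓ m : ℕ} (S : Set (FG ℓ)) : MeasurableSpace (Conf ℓ m) :=
  MeasurableSpace.comap (fun x => S.restrict x) inferInstance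

/-- The past algebra `𝒜_{p,a}`, generated by the coordinates in `W_a`. -/
def pastAlg {ℓ m : ℕ} (a : Fin ℓ) : MeasurableSpace (Conf ℓ m) := coordAlg (Wa a)

/-- The atom of `x` for the σ-algebra generated by the coordinates in `S`. -/
def atomOn {ℓ m : ℕ} (S : Set (FG ℓ)) (x : Conf ℓ m) : Set (Conf ℓ m) :=
  {y | ∀ g ∈ S, y g = x g}

/-- The regular conditional probability `μ^𝒞(s | x)` given the sub-σ-algebra `𝒞`. -/
noncomputable def condProb {ℓ m : ℕ} (μ : Measure (Conf ℓ m)) [IsFiniteMeasure μ]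
    (𝒞 : MeasurableSpace (Conf ℓ m)) (s : Set (Conf ℓ m)) (x : Conf ℓ m) : ENNReal :=
  @condExpKernel (Conf ℓ m) MeasurableSpace.pi inferInstance μ inferInstance 𝒞 x s

/-- Conditional information `I_μ(ℬ|𝒞)(x) = −log μ^𝒞([x]_ℬ | x)`, where the atom `[x]_ℬ`
of the sub-σ-algebra `ℬ` is supplied explicitly. -/
noncomputable def condInfo {ℓ m : ℕ} (μ : Measure (Conf ℓ m)) [IsFiniteMeasure μ]
    (𝒞 : MeasurableSpace (Conf ℓ m)) (atomB : Set (Conf ℓ m)) (x : Conf ℓ m) : ℝ :=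
  - Real.log ((condProb μ 𝒞 atomB x).toReal)

/-- The information cocycle `J(𝒜_{p,a}, V) = I(𝒜_{p,a}|V⁻¹𝒜_{p,a}) − I(V⁻¹𝒜_{p,a}|𝒜_{p,a})`
for a measure-preserving `V` (the Radon–Nikodym term of the general definition vanishes). -/
noncomputable def Jcoc {ℓ m : ℕ} (a : Fin ℓ) (μ : Measure (Conf ℓ m)) [IsFiniteMeasure μ]
    (V : Conf ℓ m → Conf ℓ m) (x : Conf ℓ m) : ℝ :=
  condInfo μ (MeasurableSpace.comap V (pastAlg a)) (atomOn (Wa a) x) x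
    - condInfo μ (pastAlg a) (V ⁻¹' atomOn (Wa a) (V x)) x

/-- The shift by `g` as a bijection of the configuration space. -/
def shiftEquiv {ℓ m : ℕ} (g : FG ℓ) : Equiv.Perm (Conf ℓ m) where
  toFun := shift g
  invFun := shift g⁻¹
  left_inv x := by funext h; simp [shift, mul_assoc]
  right_inv x := by funext h; simp [shift, mul_assoc]

/-- A locally finite measure-preserving measurable bijection of `(X_p, μ)`. -/
def IsLocallyFiniteMP {ℓ m : ℕ} (μ : Measure (Conf ℓ m)) (V : Equiv.Perm (Conf ℓ m)) : Prop :=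
  Measurable ⇑V ∧ Measurable ⇑V.symm ∧ MeasurePreserving ⇑V μ μ ∧
    ∀ᵐ x ∂μ, {g : FG ℓ | V x g ≠ x g}.Finite

/-- The group `G_p` generated by the shifts together with the locally finite
measure-preserving bijections. -/
def Gp {ℓ m : ℕ} (μ : Measure (Conf ℓ m)) : Subgroup (Equiv.Perm (Conf ℓ m)) :=
  Subgroup.closure ({V | ∃ g : FG ℓ, V = shiftEquiv g} ∪ {V | IsLocallyFiniteMP μ V})

/-- The cylinder set where the coordinates on `S` are fixed to the values of `η`. -/
def cylOn {ℓ m : ℕ} (S : Set (FG ℓ)) (η : FG ℓ → Fin m) : Set (Conf ℓ m) :=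
  {x | ∀ g ∈ S, x g = η g}

/-- `H_C^+`: locally finite m.p. bijections fixing all coordinates in `B(N) ∪ (F_ℓ ∖ W_a)`. -/
def HCplus {ℓ m : ℕ} (μ : Measure (Conf ℓ m)) (a : Fin ℓ) (N : ℕ) :
    Set (Equiv.Perm (Conf ℓ m)) :=
  {h | IsLocallyFiniteMP μ h ∧ ∀ᵐ x ∂μ, ∀ g ∈ ball ℓ N ∪ (Wa a)ᶜ, h x g = x g}

/-- `H_C^-`: locally finite m.p. bijections fixing all coordinates in `W_a ∪ B(N)`. -/
def HCminus {ℓ m : ℕ} (μ : Measure (Conf ℓ m)) (a : Fin ℓ) (N : ℕ) :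
    Set (Equiv.Perm (Conf ℓ m)) :=
  {h | IsLocallyFiniteMP μ h ∧ ∀ᵐ x ∂μ, ∀ g ∈ Wa a ∪ ball ℓ N, h x g = x g}

/-- The normalized measure `μ_C(A) = μ(A)/μ(C)` (real-valued). -/
noncomputable def relMeas {ℓ m : ℕ} (μ : Measure (Conf ℓ m)) (C A : Set (Conf ℓ m)) : ℝ :=
  (μ A).toReal / (μ C).toReal

/-- The set where `m_φ(x) ≤ M`. -/
def mphiLe {ℓ m n : ℕ} (φ : Conf ℓ m → Conf ℓ n) (a : Fin ℓ) (M : ℕ) : Set (Conf ℓ m) :=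
  {x | ∀ g ∈ Wa a, rphi φ (shift g⁻¹ x) ≤ wl g + M}

/-- The set where `a_φ(x) ≤ M`. -/
def aphiLe {ℓ m n : ℕ} (φ : Conf ℓ m → Conf ℓ n) (a : Fin ℓ) (M : ℕ) : Set (Conf ℓ m) :=
  {x | ∀ g ∉ Wa a, rphi φ (shift g⁻¹ x) ≤ wl g + M}

/-- The set `D = C ∩ {x : m_φ(x) ≤ M, a_φ(x) ≤ M}` for the cylinder `C` over `B(M)`
determined by `η`. -/
def Dset {ℓ m n : ℕ} (φ : Conf ℓ m → Conf ℓ n) (a : Fin ℓ) (M : ℕ) (η : FG ℓ → Fin m) :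
    Set (Conf ℓ m) :=
  cylOn (ball ℓ M) η ∩ (mphiLe φ a M ∩ aphiLe φ a M)

/-- The coboundary equation `J(𝒜_{p,a}, V) = J(𝒜_{q,a}, φVφ⁻¹)∘φ + f∘V − f` a.e.,
for every `V ∈ G_p`. -/
def CocycleEq {ℓ m n : ℕ} (a : Fin ℓ) (μp : Measure (Conf ℓ m)) (μq : Measure (Conf ℓ n))
    [IsFiniteMeasure μp] [IsFiniteMeasure μq] (φ : Conf ℓ m → Conf ℓ n)
    (ψ : Conf ℓ n → Conf ℓ m) (f : Conf ℓ m → ℝ) : Prop :=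
  ∀ V ∈ Gp μp, ∀ᵐ x ∂μp,
    Jcoc a μp (⇑V) x = Jcoc a μq (φ ∘ ⇑V ∘ ψ) (φ x) + f (V x) - f x

/-- Tail property: every point obtained from a point of `D ∖ E` by altering coordinates only
at `a^k` for `−M−n < k < −M` (or only at `a^k` for `M < k < M+n`) lies in `A`. -/
def TailProp {ℓ m : ℕ} (a : Fin ℓ) (M : ℕ) (D E A : Set (Conf ℓ m)) : Prop :=
  ∀ x ∈ D \ E, ∀ n : ℕ, ∀ x' : Conf ℓ m,
    ((∀ g : FG ℓ,
        (¬ ∃ k : ℤ, -(M : ℤ) - (n : ℤ) < k ∧ k < -(M : ℤ) ∧ g = (FreeGroup.of a) ^ k) →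
        x' g = x g) ∨
     (∀ g : FG ℓ,
        (¬ ∃ k : ℤ, (M : ℤ) < k ∧ k < (M : ℤ) + (n : ℤ) ∧ g = (FreeGroup.of a) ^ k) →
        x' g = x g)) →
    x' ∈ A


section Aux

open scoped ENNReal

variable {ℓ m n : ℕ}

lemma ball_finite (ℓ r : ℕ) : (ball ℓ r).Finite := by
  have hsub : ball ℓ r ⊆ FreeGroup.toWord ⁻¹' {l : List (Fin ℓ × Bool) | l.length ≤ r} :=
    fun g hg => hg
  exact Set.Finite.subset
    ((List.finite_length_le (Fin ℓ × Bool) r).preimage FreeGroup.toWord_injective.injOn) hsub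

lemma measurableSet_cylF (A : Finset (FG ℓ)) (σ : FG ℓ → Fin m) :
    MeasurableSet {x : Conf ℓ m | ∀ g ∈ A, x g = σ g} := by
  have h : {x : Conf ℓ m | ∀ g ∈ A, x g = σ g}
      = ⋂ g ∈ A, (fun x : Conf ℓ m => x g) ⁻¹' {σ g} := by
    ext x; simp
  rw [h]
  exact MeasurableSet.biInter A.countable_toSet fun g _ =>
    (measurable_pi_apply g) (measurableSet_singleton (σ g))

lemma measurable_shift (g : FG ℓ) : Measurable (shift g : Conf ℓ m → Conf ℓ m) :=
  measurable_pi_lambda _ fun h => measurable_pi_apply _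

/-- The collection of cylinder sets. -/
def cylSets (ℓ m : ℕ) : Set (Set (Conf ℓ m)) :=
  {S | ∃ (A : Finset (FG ℓ)) (σ : FG ℓ → Fin m), S = {x | ∀ g ∈ A, x g = σ g}}

lemma isPiSystem_cylSets : IsPiSystem (cylSets ℓ m) := by
  rintro S ⟨A, σ, rfl⟩ T ⟨B, τ, rfl⟩ ⟨x₀, h1, h2⟩
  refine ⟨A ∪ B, x₀, ?_⟩
  ext y
  simp only [Set.mem_inter_iff, Set.mem_setOf_eq, Finset.mem_union]
  constructor
  · rintro ⟨hA, hB⟩ g (hg | hg)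
    · rw [hA g hg, ← h1 g hg]
    · rw [hB g hg, ← h2 g hg]
  · intro hy
    exact ⟨fun g hg => (hy g (Or.inl hg)).trans (h1 g hg),
      fun g hg => (hy g (Or.inr hg)).trans (h2 g hg)⟩

lemma generateFrom_cylSets :
    MeasurableSpace.generateFrom (cylSets ℓ m) = (inferInstance : MeasurableSpace (Conf ℓ m)) := by
  apply le_antisymm
  · refine MeasurableSpace.generateFrom_le ?_
    rintro S ⟨A, σ, rfl⟩
    exact measurableSet_cylF A σ
  · have : (inferInstance : MeasurableSpace (Conf ℓ m)) = MeasurableSpace.pi := rfl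
    rw [this, MeasurableSpace.pi]
    refine iSup_le fun g => ?_
    have hg : @Measurable (Conf ℓ m) (Fin m)
        (MeasurableSpace.generateFrom (cylSets ℓ m)) _ (fun x => x g) := by
      refine @measurable_to_countable' (Fin m) (Conf ℓ m) _ _
        (MeasurableSpace.generateFrom (cylSets ℓ m)) _ fun c => ?_
      refine MeasurableSpace.measurableSet_generateFrom ⟨{g}, fun _ => c, ?_⟩
      ext x; simp [Set.mem_preimage]
    exact hg.comap_le

lemma IsBernoulli.shift_mp {P : Fin m → ℝ} {μ : Measure (Conf ℓ m)}
    (h : IsBernoulli P μ) (g : FG ℓ) : MeasurePreserving (shift g) μ μ := by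
  classical
  have hprob : IsProbabilityMeasure μ := h.1
  refine ⟨measurable_shift g, ?_⟩
  have hmap : IsProbabilityMeasure (Measure.map (shift g) μ) :=
    Measure.isProbabilityMeasure_map (measurable_shift g).aemeasurable
  refine ext_of_generate_finite _ generateFrom_cylSets.symm isPiSystem_cylSets ?_ (by simp)
  rintro S ⟨A, σ, rfl⟩
  rw [Measure.map_apply (measurable_shift g) (measurableSet_cylF A σ)]
  have hpre : shift g ⁻¹' {x : Conf ℓ m | ∀ h ∈ A, x h = σ h}
      = {x : Conf ℓ m | ∀ h' ∈ A.image (fun h => g⁻¹ * h), x h' = σ (g * h')} := by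
    ext x
    simp only [Set.mem_preimage, Set.mem_setOf_eq, Finset.mem_image, shift]
    constructor
    · rintro hx h' ⟨h, hh, rfl⟩
      rw [mul_inv_cancel_left]
      exact hx h hh
    · intro hx h hh
      have := hx (g⁻¹ * h) ⟨h, hh, rfl⟩
      rwa [mul_inv_cancel_left] at this
  rw [hpre]
  have h1 := h.2 (A.image (fun h => g⁻¹ * h)) (fun h' => σ (g * h'))
  have h2 := h.2 A σ
  rw [Finset.prod_image (fun x _ y _ hxy => by simpa using hxy)] at h1
  simp only [mul_inv_cancel_left] at h1
  refine (ENNReal.toReal_eq_toReal_iff' (measure_ne_top _ _) (measure_ne_top _ _)).mp ?_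
  rw [h1, h2]

/-- The set of configurations for which the ball of radius `r` determines `φ(·)_e`,
expressed symmetrically in pairs. -/
def PrSet {ℓ m n : ℕ} (φ : Conf ℓ m → Conf ℓ n) (r : ℕ) : Set (Conf ℓ m) :=
  {x | ∀ x' x'' : Conf ℓ m, (∀ g ∈ ball ℓ r, x' g = x g) →
    (∀ g ∈ ball ℓ r, x'' g = x g) → φ x' 1 = φ x'' 1}

lemma prSet_eq_codeSet (φ : Conf ℓ m → Conf ℓ n) (r : ℕ) :
    PrSet φ r = {x | r ∈ codeSet φ x} := by
  ext x
  constructor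
  · intro hx x' hx'
    exact hx x' x hx' (fun g _ => rfl)
  · intro hx x' x'' h1 h2
    rw [hx x' h1, hx x'' h2]

lemma measurableSet_prSet (φ : Conf ℓ m → Conf ℓ n) (r : ℕ) :
    MeasurableSet (PrSet φ r) := by
  classical
  set B : Finset (FG ℓ) := (ball_finite ℓ r).toFinset with hB
  have hmemB : ∀ g : FG ℓ, g ∈ B ↔ g ∈ ball ℓ r := fun g => (ball_finite ℓ r).mem_toFinset
  have key : PrSet φ r = ⋃ (η : B → Fin m)
      (_ : ∀ x' x'' : Conf ℓ m, (∀ g : B, x' g = η g) → (∀ g : B, x'' g = η g) →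
        φ x' 1 = φ x'' 1),
      {x : Conf ℓ m | ∀ g : B, x g = η g} := by
    ext x
    simp only [Set.mem_iUnion, Set.mem_setOf_eq]
    constructor
    · intro hx
      refine ⟨fun g => x g, ?_, fun g => rfl⟩
      intro x' x'' h1 h2
      exact hx x' x'' (fun g hg => h1 ⟨g, (hmemB g).mpr hg⟩)
        (fun g hg => h2 ⟨g, (hmemB g).mpr hg⟩)
    · rintro ⟨η, hη, hxη⟩
      intro x' x'' h1 h2
      refine hη x' x'' (fun g => ?_) (fun g => ?_)
      · rw [h1 g ((hmemB g).mp g.2), hxη g]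
      · rw [h2 g ((hmemB g).mp g.2), hxη g]
  rw [key]
  refine MeasurableSet.iUnion fun η => MeasurableSet.iUnion fun _ => ?_
  have h : {x : Conf ℓ m | ∀ g : B, x g = η g}
      = ⋂ g : B, (fun x : Conf ℓ m => x (g : FG ℓ)) ⁻¹' {η g} := by
    ext x; simp
  rw [h]
  exact MeasurableSet.iInter fun g =>
    (measurable_pi_apply (g : FG ℓ)) (measurableSet_singleton (η g))

lemma codeSet_mono (φ : Conf ℓ m → Conf ℓ n) (x : Conf ℓ m) {r r' : ℕ} (hrr : r ≤ r')
    (hr : r ∈ codeSet φ x) : r' ∈ codeSet φ x :=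
  fun x' hx' => hr x' (fun g hg => hx' g (le_trans hg hrr))

lemma measurableSet_rphi_le (φ : Conf ℓ m → Conf ℓ n) (k : ℕ) :
    MeasurableSet {x : Conf ℓ m | rphi φ x ≤ k} := by
  have key : {x : Conf ℓ m | rphi φ x ≤ k} = PrSet φ k ∪ ⋂ j, (PrSet φ j)ᶜ := by
    ext x
    simp only [Set.mem_union, Set.mem_iInter, Set.mem_compl_iff, prSet_eq_codeSet,
      Set.mem_setOf_eq]
    constructor
    · intro hx
      by_cases hne : (codeSet φ x).Nonempty
      · exact Or.inl (codeSet_mono φ x hx (Nat.sInf_mem hne))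
      · exact Or.inr fun j hj => hne ⟨j, hj⟩
    · rintro (hk | hall)
      · exact Nat.sInf_le hk
      · have hemp : codeSet φ x = ∅ := Set.eq_empty_iff_forall_notMem.mpr hall
        rw [rphi, hemp, Nat.sInf_empty]
        exact Nat.zero_le k
  rw [key]
  exact (measurableSet_prSet φ k).union
    (MeasurableSet.iInter fun j => (measurableSet_prSet φ j).compl)

lemma measurableSet_rphi_ge (φ : Conf ℓ m → Conf ℓ n) (k : ℕ) :
    MeasurableSet {x : Conf ℓ m | k ≤ rphi φ x} := by
  cases k with
  | zero => simp
  | succ k =>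
    have h : {x : Conf ℓ m | k + 1 ≤ rphi φ x} = {x : Conf ℓ m | rphi φ x ≤ k}ᶜ := by
      ext x
      simp only [Set.mem_compl_iff, Set.mem_setOf_eq, not_le]
      omega
    rw [h]
    exact (measurableSet_rphi_le φ k).compl

lemma vphi_eq_tsum (φ : Conf ℓ m → Conf ℓ n) (x : Conf ℓ m) :
    (vphi φ x : ℝ≥0∞)
      = ∑' g : FG ℓ, Set.indicator {y : Conf ℓ m | wl g ≤ rphi φ y} (fun _ => 1) x := by
  classical
  have hfin := ball_finite ℓ (rphi φ x)
  have h1 : ∑' g : FG ℓ, Set.indicator {y : Conf ℓ m | wl g ≤ rphi φ y} (fun _ => (1 : ℝ≥0∞)) x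
      = ∑ g ∈ hfin.toFinset,
          Set.indicator {y : Conf ℓ m | wl g ≤ rphi φ y} (fun _ => (1 : ℝ≥0∞)) x := by
    exact tsum_eq_sum fun g hg =>
      Set.indicator_of_notMem
        (show x ∉ {y : Conf ℓ m | wl g ≤ rphi φ y} from
          fun hc => hg (hfin.mem_toFinset.mpr hc)) _
  have h2 : ∑ g ∈ hfin.toFinset,
        Set.indicator {y : Conf ℓ m | wl g ≤ rphi φ y} (fun _ => (1 : ℝ≥0∞)) x
      = ∑ _g ∈ hfin.toFinset, (1 : ℝ≥0∞) :=
    Finset.sum_congr rfl fun g hg =>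
      Set.indicator_of_mem
        (show x ∈ {y : Conf ℓ m | wl g ≤ rphi φ y} from hfin.mem_toFinset.mp hg) _
  rw [h1, h2]
  rw [Finset.sum_const, nsmul_eq_mul, mul_one]
  norm_cast
  rw [vphi, Set.ncard_eq_toFinset_card _ hfin]

lemma lintegral_vphi (φ : Conf ℓ m → Conf ℓ n) (μ : Measure (Conf ℓ m)) :
    ∫⁻ x, (vphi φ x : ℝ≥0∞) ∂μ = ∑' g : FG ℓ, μ {x : Conf ℓ m | wl g ≤ rphi φ x} := by
  calc ∫⁻ x, (vphi φ x : ℝ≥0∞) ∂μ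
      = ∫⁻ x, ∑' g : FG ℓ,
          Set.indicator {y : Conf ℓ m | wl g ≤ rphi φ y} (fun _ => (1 : ℝ≥0∞)) x ∂μ := by
        refine lintegral_congr fun x => ?_
        exact vphi_eq_tsum φ x
    _ = ∑' g : FG ℓ, ∫⁻ x,
          Set.indicator {y : Conf ℓ m | wl g ≤ rphi φ y} (fun _ => (1 : ℝ≥0∞)) x ∂μ :=
        lintegral_tsum fun g =>
          (measurable_const.indicator (measurableSet_rphi_ge φ (wl g))).aemeasurable
    _ = ∑' g : FG ℓ, μ {x : Conf ℓ m | wl g ≤ rphi φ x} := by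
        refine tsum_congr fun g => ?_
        exact lintegral_indicator_one (measurableSet_rphi_ge φ (wl g))

end Aux

theorem mphi_finite_ae
    {ℓ m n : ℕ} (hℓ : 1 ≤ ℓ) (a : Fin ℓ) (P : Fin m → ℝ) (Q : Fin n → ℝ)
    (hP : ∀ i, 0 < P i) (hQ : ∀ j, 0 < Q j)
    (hPsum : ∑ i, P i = 1) (hQsum : ∑ j, Q j = 1)
    (μp : Measure (Conf ℓ m)) (μq : Measure (Conf ℓ n))
    (hμp : IsBernoulli P μp) (hμq : IsBernoulli Q μq)
    (φ : Conf ℓ m → Conf ℓ n) (ψ : Conf ℓ n → Conf ℓ m)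
    (hiso : IsFinitaryIso μp μq φ ψ) (hexp : FiniteExpectation μp μq φ ψ) :
    ∀ᵐ x ∂μp, ∃ M : ℕ, ∀ g ∈ Wa a, rphi φ (shift g⁻¹ x) ≤ wl g + M := by
  classical
  set s : FG ℓ → Set (Conf ℓ m) :=
    fun g => {x | g ∈ Wa a ∧ wl g + 1 ≤ rphi φ (shift g⁻¹ x)} with hs
  have hbound : ∀ g : FG ℓ, μp (s g) ≤ μp {x : Conf ℓ m | wl g ≤ rphi φ x} := by
    intro g
    calc μp (s g) ≤ μp ((shift g⁻¹) ⁻¹' {x : Conf ℓ m | wl g + 1 ≤ rphi φ x}) :=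
          measure_mono (fun x hx => hx.2)
      _ = μp {x : Conf ℓ m | wl g + 1 ≤ rphi φ x} :=
          (hμp.shift_mp g⁻¹).measure_preimage
            (measurableSet_rphi_ge φ (wl g + 1)).nullMeasurableSet
      _ ≤ μp {x : Conf ℓ m | wl g ≤ rphi φ x} :=
          measure_mono (fun x hx => le_trans (Nat.le_succ _) hx)
  have hsum : ∑' g : FG ℓ, μp (s g) ≠ ⊤ := by
    refine ne_top_of_le_ne_top ?_ (ENNReal.tsum_le_tsum hbound)
    rw [← lintegral_vphi φ μp]
    exact hexp.1.ne
  have hBC : μp (limsup s cofinite) = 0 := measure_limsup_cofinite_eq_zero hsum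
  have hae : ∀ᵐ x ∂μp, {g : FG ℓ | x ∈ s g}.Finite := by
    rw [ae_iff]
    refine measure_mono_null ?_ hBC
    intro x hx
    rw [mem_limsup_iff_frequently_mem, frequently_cofinite_iff_infinite]
    exact hx
  filter_upwards [hae] with x hx
  obtain ⟨M, hM⟩ : ∃ M : ℕ, ∀ g ∈ {g : FG ℓ | x ∈ s g}, rphi φ (shift g⁻¹ x) ≤ M := by
    obtain ⟨M, hM⟩ := (hx.image (fun g => rphi φ (shift g⁻¹ x))).bddAbove
    exact ⟨M, fun g hg => hM (Set.mem_image_of_mem _ hg)⟩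
  refine ⟨M, fun g hg => ?_⟩
  by_cases hcase : wl g + 1 ≤ rphi φ (shift g⁻¹ x)
  · exact le_trans (hM g ⟨hg, hcase⟩) (Nat.le_add_left M (wl g))
  · omega


end Finitary
end

section
/- For every integer n ≥ 1, let ℬ_n be the sub-σ-algebra of X_p generated by the coordinate maps x ↦ x_g for g ∈ W_a ∖ {a^0, a^1, …, a^{n−1}} (the image of the past algebra 𝒜_{p,a} under the shift by a^n), whose atom at x is [x]_{ℬ_n} = {y ∈ X_p : y_g = x_g for all g ∈ W_a ∖ {a^0, …, a^{n−1}}}. Then for μ_p-a.e. x ∈ X_p: I_{μ_p}(𝒜_{p,a} | ℬ_n)(x) = Σ_{i=0}^{n−1} (−log P_{x_{a^i}}) and I_{μ_p}(ℬ_n | 𝒜_{p,a})(x) = 0; consequently the information cocycle satisfies J(𝒜_{p,a}, a^n)(x) = Σ_{i=0}^{n−1} (−log P_{x_{a^i}}). -/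
open MeasureTheory ProbabilityTheory Filter

namespace Finitary

section Aux

variable {ℓ m : ℕ}

lemma coordAlg_le (S : Set (FG ℓ)) :
    (coordAlg S : MeasurableSpace (Conf ℓ m)) ≤ MeasurableSpace.pi :=
  (Set.measurable_restrict S).comap_le

lemma measurable_coord_coordAlg {S : Set (FG ℓ)} {g : FG ℓ} (hg : g ∈ S) :
    @Measurable (Conf ℓ m) (Fin m) (coordAlg S) _ (fun x => x g) := by
  have h1 : @Measurable (Conf ℓ m) (S → Fin m) (coordAlg S) _ S.restrict :=
    Measurable.of_comap_le le_rfl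
  exact (measurable_pi_apply (⟨g, hg⟩ : S)).comp h1

lemma measurableSet_coord_coordAlg {S : Set (FG ℓ)} {g : FG ℓ} (hg : g ∈ S) (c : Fin m) :
    MeasurableSet[coordAlg S] {x : Conf ℓ m | x g = c} := by
  have h : {x : Conf ℓ m | x g = c} = (fun x : Conf ℓ m => x g) ⁻¹' {c} := rfl
  rw [h]
  exact measurable_coord_coordAlg hg (measurableSet_singleton c)

lemma measurableSet_coord (g : FG ℓ) (c : Fin m) :
    MeasurableSet {x : Conf ℓ m | x g = c} := by
  have h : {x : Conf ℓ m | x g = c} = (fun x : Conf ℓ m => x g) ⁻¹' {c} := rfl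
  rw [h]
  exact measurable_pi_apply g (measurableSet_singleton c)

lemma measurableSet_atomOn (S : Set (FG ℓ)) (x : Conf ℓ m) :
    MeasurableSet (atomOn S x) := by
  have h : atomOn S x = ⋂ g ∈ S, {y : Conf ℓ m | y g = x g} := by
    ext y; simp [atomOn]
  rw [h]
  exact MeasurableSet.biInter (Set.to_countable S) fun g _ => measurableSet_coord g (x g)

lemma measurableSet_cylFin (F : Finset (FG ℓ)) (y : Conf ℓ m) :
    MeasurableSet {z : Conf ℓ m | ∀ g ∈ F, z g = y g} := by
  have h : {z : Conf ℓ m | ∀ g ∈ F, z g = y g} = ⋂ g ∈ F, {z : Conf ℓ m | z g = y g} := by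
    ext z; simp
  rw [h]
  exact MeasurableSet.biInter F.countable_toSet fun g _ => measurableSet_coord g (y g)

lemma condexpKernel_atom_eq_one (μ : Measure (Conf ℓ m)) [IsFiniteMeasure μ]
    [IsProbabilityMeasure μ] {S S' : Set (FG ℓ)} (hSS : S ⊆ S') :
    ∀ᵐ x ∂μ, condExpKernel μ (coordAlg S') x (atomOn S x) = 1 := by
  have hm : (coordAlg S' : MeasurableSpace (Conf ℓ m)) ≤ MeasurableSpace.pi := coordAlg_le S'
  have key : ∀ (g : S) (c : Fin m), ∀ᵐ x ∂μ,
      (condExpKernel μ (coordAlg S') x {y : Conf ℓ m | y (g : FG ℓ) = c}).toReal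
        = Set.indicator {y : Conf ℓ m | y (g : FG ℓ) = c} (fun _ => (1 : ℝ)) x := by
    intro g c
    have hmeas := measurableSet_coord (m := m) (g : FG ℓ) c
    have h2 : μ[Set.indicator {y : Conf ℓ m | y (g : FG ℓ) = c} (fun _ => (1 : ℝ)) | coordAlg S']
        = Set.indicator {y : Conf ℓ m | y (g : FG ℓ) = c} (fun _ => (1 : ℝ)) :=
      condExp_of_stronglyMeasurable hm
        (stronglyMeasurable_const.indicator (measurableSet_coord_coordAlg (hSS g.2) c))
        ((integrable_const (1 : ℝ)).indicator hmeas)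
    filter_upwards [condExpKernel_ae_eq_condExp (μ := μ) hm hmeas] with x hx
    simp only [Measure.real] at hx
    rw [hx, h2]
  have key' : ∀ᵐ x ∂μ, ∀ (g : S) (c : Fin m),
      (condExpKernel μ (coordAlg S') x {y : Conf ℓ m | y (g : FG ℓ) = c}).toReal
        = Set.indicator {y : Conf ℓ m | y (g : FG ℓ) = c} (fun _ => (1 : ℝ)) x := by
    rw [ae_all_iff]; intro g; rw [ae_all_iff]; exact key g
  filter_upwards [key'] with x hx
  have hfull : ∀ g : S, condExpKernel μ (coordAlg S') x {y : Conf ℓ m | y (g : FG ℓ) = x g} = 1 := by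
    intro g
    have h := hx g (x g)
    rw [Set.indicator_of_mem (by simp : x ∈ {y : Conf ℓ m | y (g : FG ℓ) = x g})] at h
    exact (ENNReal.toReal_eq_one_iff _).mp h
  have hsub : (atomOn S x)ᶜ ⊆ ⋃ g : S, {y : Conf ℓ m | y (g : FG ℓ) = x g}ᶜ := by
    intro y hy
    simp only [atomOn, Set.mem_compl_iff, Set.mem_setOf_eq, not_forall] at hy
    obtain ⟨g, hg, hne⟩ := hy
    exact Set.mem_iUnion.mpr ⟨⟨g, hg⟩, hne⟩
  have hnull : condExpKernel μ (coordAlg S') x ((atomOn S x)ᶜ) = 0 := by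
    refine measure_mono_null hsub (measure_iUnion_null fun g => ?_)
    exact (prob_compl_eq_zero_iff (measurableSet_coord _ _)).mpr (hfull g)
  exact (prob_compl_eq_zero_iff (measurableSet_atomOn S x)).mp hnull

lemma meas_cyl_sel {P : Fin m → ℝ} {μ : Measure (Conf ℓ m)} [IsFiniteMeasure μ]
    (hμ : IsBernoulli P μ) [Nonempty (Fin m)]
    (F : Finset (FG ℓ)) (sel : FG ℓ → Finset (Fin m)) :
    (μ {x : Conf ℓ m | ∀ g ∈ F, x g ∈ sel g}).toReal = ∏ g ∈ F, ∑ c ∈ sel g, P c := by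
  classical
  set d : Fin m := Classical.arbitrary (Fin m) with hd
  set e : (∀ g ∈ F, Fin m) → Conf ℓ m :=
    fun τ g => if h : g ∈ F then τ g h else d with he
  have hdecomp : {x : Conf ℓ m | ∀ g ∈ F, x g ∈ sel g}
      = ⋃ τ ∈ F.pi sel, {x : Conf ℓ m | ∀ g ∈ F, x g = e τ g} := by
    ext x
    simp only [Set.mem_setOf_eq, Set.mem_iUnion, Finset.mem_pi]
    constructor
    · intro hx
      exact ⟨fun g _ => x g, fun g hg => hx g hg, fun g hg => by simp [he, hg]⟩
    · rintro ⟨τ, hτ, hx⟩ g hg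
      rw [hx g hg]
      simpa [he, hg] using hτ g hg
  have hdisj : (↑(F.pi sel) : Set (∀ g ∈ F, Fin m)).PairwiseDisjoint
      (fun τ => {x : Conf ℓ m | ∀ g ∈ F, x g = e τ g}) := by
    intro τ1 _ τ2 _ hne
    refine Set.disjoint_left.mpr fun x hx1 hx2 => hne ?_
    funext g hg
    have h := (hx1 g hg).symm.trans (hx2 g hg)
    simpa [he, hg] using h
  have hmeas : ∀ τ ∈ F.pi sel,
      MeasurableSet {x : Conf ℓ m | ∀ g ∈ F, x g = e τ g} := by
    intro τ _
    exact measurableSet_cylFin F (e τ)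
  rw [hdecomp, measure_biUnion_finset hdisj hmeas,
    ENNReal.toReal_sum (fun τ _ => measure_ne_top _ _), Finset.prod_sum]
  refine Finset.sum_congr rfl fun τ hτ => ?_
  rw [hμ.2 F (e τ), ← Finset.prod_attach F (fun g => P (e τ g))]
  exact Finset.prod_congr rfl fun g _ => by simp [he, g.2]

lemma indep_cyl {P : Fin m → ℝ} {μ : Measure (Conf ℓ m)} [IsFiniteMeasure μ]
    (hμ : IsBernoulli P μ) [Nonempty (Fin m)] {S : Set (FG ℓ)} (Tf : Finset (FG ℓ))
    (hdisj : ∀ g ∈ Tf, g ∉ S) (y : Conf ℓ m) :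
    ∀ s : Set (Conf ℓ m), MeasurableSet[coordAlg S] s →
      μ (s ∩ {z : Conf ℓ m | ∀ g ∈ Tf, z g = y g})
        = μ s * μ {z : Conf ℓ m | ∀ g ∈ Tf, z g = y g} := by
  classical
  haveI : IsProbabilityMeasure μ := hμ.1
  set B := {z : Conf ℓ m | ∀ g ∈ Tf, z g = y g} with hB
  have hBmeas : MeasurableSet B := measurableSet_cylFin Tf y
  set C : Set (Set (Conf ℓ m)) := {t | ∃ (F : Finset (FG ℓ)) (sel : FG ℓ → Finset (Fin m)),
    ↑F ⊆ S ∧ t = {x : Conf ℓ m | ∀ g ∈ F, x g ∈ sel g}} with hC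
  have h_eq : (coordAlg S : MeasurableSpace (Conf ℓ m)) = MeasurableSpace.generateFrom C := by
    refine le_antisymm ?_ ?_
    · have hcoords : ∀ g : S, @Measurable (Conf ℓ m) (Fin m) (MeasurableSpace.generateFrom C) _
          (fun x => x (g : FG ℓ)) := by
        intro g
        refine @measurable_to_countable' (Fin m) (Conf ℓ m) _ _
          (MeasurableSpace.generateFrom C) _ fun c => ?_
        refine MeasurableSpace.measurableSet_generateFrom
          ⟨{(g : FG ℓ)}, fun _ => {c}, by simpa using g.2, ?_⟩
        ext x; simp
      have hmeas : @Measurable (Conf ℓ m) (S → Fin m) (MeasurableSpace.generateFrom C)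
          MeasurableSpace.pi S.restrict :=
        (@measurable_pi_iff (Conf ℓ m) S (fun _ => Fin m)
          (MeasurableSpace.generateFrom C) _ S.restrict).mpr hcoords
      exact hmeas.comap_le
    · refine MeasurableSpace.generateFrom_le fun t ht => ?_
      obtain ⟨F, sel, hFS, rfl⟩ := ht
      have h : {x : Conf ℓ m | ∀ g ∈ F, x g ∈ sel g}
          = ⋂ g ∈ F, (fun x : Conf ℓ m => x g) ⁻¹' ↑(sel g) := by
        ext x; simp
      rw [h]
      exact MeasurableSet.biInter F.countable_toSet fun g hg =>
        measurable_coord_coordAlg (hFS hg) ((sel g).countable_toSet.measurableSet)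
  have h_inter : IsPiSystem C := by
    rintro t1 ⟨F1, sel1, hF1, rfl⟩ t2 ⟨F2, sel2, hF2, rfl⟩ _
    refine ⟨F1 ∪ F2, fun g =>
      (if g ∈ F1 then sel1 g else Finset.univ) ∩ (if g ∈ F2 then sel2 g else Finset.univ),
      by rw [Finset.coe_union]; exact Set.union_subset hF1 hF2, ?_⟩
    ext x
    simp only [Set.mem_inter_iff, Set.mem_setOf_eq, Finset.mem_union, Finset.mem_inter]
    constructor
    · rintro ⟨h1, h2⟩ g hg
      constructor
      · by_cases hgF1 : g ∈ F1 <;> simp [hgF1, h1 g]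
      · by_cases hgF2 : g ∈ F2 <;> simp [hgF2, h2 g]
    · intro h
      constructor
      · intro g hg
        have := (h g (Or.inl hg)).1
        simpa [hg] using this
      · intro g hg
        have := (h g (Or.inr hg)).2
        simpa [hg] using this
  have h_basic : ∀ t ∈ C, μ (t ∩ B) = μ t * μ B := by
    rintro t ⟨F, sel, hFS, rfl⟩
    have hFT : Disjoint F Tf := Finset.disjoint_left.mpr fun {g} hgF hgT => hdisj g hgT (hFS hgF)
    set sel' : FG ℓ → Finset (Fin m) := fun g => if g ∈ Tf then {y g} else sel g with hsel'
    have hsplit : {x : Conf ℓ m | ∀ g ∈ F, x g ∈ sel g} ∩ B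
        = {x : Conf ℓ m | ∀ g ∈ F ∪ Tf, x g ∈ sel' g} := by
      ext x
      simp only [Set.mem_inter_iff, Set.mem_setOf_eq, hB, Finset.mem_union]
      constructor
      · rintro ⟨h1, h2⟩ g hg
        rcases hg with hg | hg
        · have hgT : g ∉ Tf := fun h' => Finset.disjoint_left.mp hFT hg h'
          simp [hsel', hgT, h1 g hg]
        · simp [hsel', hg, h2 g hg]
      · intro h
        constructor
        · intro g hg
          have hgT : g ∉ Tf := fun h' => Finset.disjoint_left.mp hFT hg h'
          have := h g (Or.inl hg)
          simpa [hsel', hgT] using this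
        · intro g hg
          have := h g (Or.inr hg)
          simpa [hsel', hg] using this
    have h3 : (μ B).toReal = ∏ g ∈ Tf, ∑ c ∈ sel' g, P c := by
      have hBe : B = {x : Conf ℓ m | ∀ g ∈ Tf, x g ∈ sel' g} := by
        ext x
        simp only [hB, Set.mem_setOf_eq]
        refine forall₂_congr fun g hg => ?_
        simp [hsel', hg]
      rw [hBe, meas_cyl_sel hμ Tf sel']
    have hprod : (μ ({x : Conf ℓ m | ∀ g ∈ F, x g ∈ sel g} ∩ B)).toReal
        = (μ {x : Conf ℓ m | ∀ g ∈ F, x g ∈ sel g}).toReal * (μ B).toReal := by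
      calc (μ ({x : Conf ℓ m | ∀ g ∈ F, x g ∈ sel g} ∩ B)).toReal
          = ∏ g ∈ F ∪ Tf, ∑ c ∈ sel' g, P c := by rw [hsplit]; exact meas_cyl_sel hμ _ sel'
        _ = (∏ g ∈ F, ∑ c ∈ sel g, P c) * (∏ g ∈ Tf, ∑ c ∈ sel' g, P c) := by
            rw [Finset.prod_union hFT]
            congr 1
            refine Finset.prod_congr rfl fun g hg => ?_
            have hgT : g ∉ Tf := fun h' => Finset.disjoint_left.mp hFT hg h'
            simp [hsel', hgT]
        _ = (μ {x : Conf ℓ m | ∀ g ∈ F, x g ∈ sel g}).toReal * (μ B).toReal := by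
            rw [meas_cyl_sel hμ F sel, h3]
    refine (ENNReal.toReal_eq_toReal_iff' (measure_ne_top _ _)
      (ENNReal.mul_ne_top (measure_ne_top _ _) (measure_ne_top _ _))).mp ?_
    rw [ENNReal.toReal_mul]
    exact hprod
  intro s hs
  refine MeasurableSpace.induction_on_inter
    (C := fun t _ => μ (t ∩ B) = μ t * μ B) h_eq h_inter (by simp) h_basic ?_ ?_ s hs
  · intro t ht ih
    have htm : MeasurableSet t := coordAlg_le S t ht
    have h1 : tᶜ ∩ B = B \ (t ∩ B) := by
      ext x
      simp only [Set.mem_inter_iff, Set.mem_compl_iff, Set.mem_diff, not_and]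
      tauto
    rw [h1, measure_diff Set.inter_subset_right (htm.inter hBmeas).nullMeasurableSet
      (measure_ne_top _ _), ih, measure_compl htm (measure_ne_top _ _), measure_univ,
      ENNReal.sub_mul (fun _ _ => measure_ne_top _ _), one_mul]
  · intro f hf hfm ih
    have h1 : (⋃ i, f i) ∩ B = ⋃ i, f i ∩ B := by rw [Set.iUnion_inter]
    rw [h1, measure_iUnion (hf.mono fun i j h => h.mono Set.inter_subset_left
      Set.inter_subset_left) (fun i => (coordAlg_le S _ (hfm i)).inter hBmeas),
      measure_iUnion hf (fun i => coordAlg_le S _ (hfm i)), ← ENNReal.tsum_mul_right]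
    exact tsum_congr ih

lemma condexpKernel_indep_cyl {P : Fin m → ℝ} {μ : Measure (Conf ℓ m)} [IsFiniteMeasure μ]
    (hμ : IsBernoulli P μ) [Nonempty (Fin m)] {S : Set (FG ℓ)} (Tf : Finset (FG ℓ))
    (hdisj : ∀ g ∈ Tf, g ∉ S) (y : Conf ℓ m) :
    ∀ᵐ x ∂μ, condExpKernel μ (coordAlg S) x {z : Conf ℓ m | ∀ g ∈ Tf, z g = y g}
      = μ {z : Conf ℓ m | ∀ g ∈ Tf, z g = y g} := by
  haveI : IsProbabilityMeasure μ := hμ.1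
  set B := {z : Conf ℓ m | ∀ g ∈ Tf, z g = y g} with hB
  have hBmeas : MeasurableSet B := measurableSet_cylFin Tf y
  have hm : (coordAlg S : MeasurableSpace (Conf ℓ m)) ≤ MeasurableSpace.pi := coordAlg_le S
  have hconst : (fun _ : Conf ℓ m => (μ B).toReal)
      =ᵐ[μ] μ[B.indicator (fun _ => (1 : ℝ)) | coordAlg S] := by
    refine ae_eq_condExp_of_forall_setIntegral_eq hm
      ((integrable_const (1 : ℝ)).indicator hBmeas)
      (fun s _ _ => (integrableOn_const_iff).mpr (Or.inr (measure_lt_top μ s)))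
      (fun s hs _ => ?_) stronglyMeasurable_const.aestronglyMeasurable
    rw [setIntegral_const, setIntegral_indicator hBmeas, setIntegral_const]
    simp only [smul_eq_mul, mul_one]
    simp only [Measure.real]
    rw [indep_cyl hμ Tf hdisj y s hs, ENNReal.toReal_mul]
  filter_upwards [(condExpKernel_ae_eq_condExp hm hBmeas).trans hconst.symm] with x hx
  exact (ENNReal.toReal_eq_toReal_iff' (measure_ne_top _ _) (measure_ne_top _ _)).mp hx

end Aux

theorem condInfo_pastAlg_shift_pow
    {ℓ m : ℕ} (hℓ : 1 ≤ ℓ) (a : Fin ℓ) (P : Fin m → ℝ)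
    (hP : ∀ i, 0 < P i) (hPsum : ∑ i, P i = 1)
    (μp : Measure (Conf ℓ m)) [IsFiniteMeasure μp] (hμp : IsBernoulli P μp)
    (N : ℕ) (hN : 1 ≤ N) :
    ∀ᵐ x ∂μp,
      condInfo μp (coordAlg (Wa a \ {g | ∃ i < N, g = (FreeGroup.of a) ^ i}))
          (atomOn (Wa a) x) x
        = ∑ i ∈ Finset.range N, -Real.log (P (x ((FreeGroup.of a) ^ i))) ∧
      condInfo μp (pastAlg a)
          (atomOn (Wa a \ {g | ∃ i < N, g = (FreeGroup.of a) ^ i}) x) x = 0 ∧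
      condInfo μp (coordAlg (Wa a \ {g | ∃ i < N, g = (FreeGroup.of a) ^ i}))
          (atomOn (Wa a) x) x
        - condInfo μp (pastAlg a)
            (atomOn (Wa a \ {g | ∃ i < N, g = (FreeGroup.of a) ^ i}) x) x
        = ∑ i ∈ Finset.range N, -Real.log (P (x ((FreeGroup.of a) ^ i))) := by
  classical
  haveI : IsProbabilityMeasure μp := hμp.1
  have hm0 : 0 < m := by
    rcases Nat.eq_zero_or_pos m with h | h
    · subst h; simp at hPsum
    · exact h
  haveI : Nonempty (Fin m) := ⟨⟨0, hm0⟩⟩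
  set Tset : Set (FG ℓ) := {g | ∃ i < N, g = (FreeGroup.of a) ^ i} with hTset
  set S' : Set (FG ℓ) := Wa a \ Tset with hS'
  have hpow_inj : Function.Injective fun i : ℕ => (FreeGroup.of a : FG ℓ) ^ i := by
    intro i j h
    have := congrArg FreeGroup.norm h
    simpa [FreeGroup.norm_of_pow] using this
  set Tf : Finset (FG ℓ) := (Finset.range N).image (fun i => (FreeGroup.of a) ^ i) with hTf
  have hTfset : (↑Tf : Set (FG ℓ)) = Tset := by
    ext g
    simp only [hTf, Finset.coe_image, Finset.coe_range, Set.mem_image, Set.mem_Iio,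
      hTset, Set.mem_setOf_eq]
    constructor
    · rintro ⟨i, hi, rfl⟩; exact ⟨i, hi, rfl⟩
    · rintro ⟨i, hi, rfl⟩; exact ⟨i, hi, rfl⟩
  have hTsub : Tset ⊆ Wa a := by
    rintro g ⟨i, hiN, rfl⟩
    cases i with
    | zero => exact Or.inl (by simp)
    | succ k =>
      refine Or.inr ?_
      have h1 : (FreeGroup.of a : FG ℓ) ^ (k + 1) * (FreeGroup.of a)⁻¹
          = (FreeGroup.of a) ^ k := by
        rw [pow_succ, mul_inv_cancel_right]
      rw [h1]
      simp [wl, FreeGroup.norm_of_pow]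
  have hdisjT : ∀ g ∈ Tf, g ∉ S' := by
    intro g hg hmem
    exact hmem.2 (by rw [← hTfset]; exact hg)
  -- representative configuration for a vector of values on the powers of `a`
  have hfin_inj : Function.Injective fun i : Fin N => (FreeGroup.of a : FG ℓ) ^ (i : ℕ) :=
    fun i j h => Fin.val_injective (hpow_inj h)
  set rep : (Fin N → Fin m) → Conf ℓ m := fun c =>
    Function.extend (fun i : Fin N => (FreeGroup.of a : FG ℓ) ^ (i : ℕ)) c
      (fun _ => c ⟨0, hN⟩) with hrep
  -- the three a.e. ingredients
  have ae_part2 := condexpKernel_atom_eq_one μp (S := S') (S' := Wa a) Set.diff_subset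
  have ae_atomS' := condexpKernel_atom_eq_one μp (S := S') (S' := S') subset_rfl
  have ae_cyl : ∀ᵐ x ∂μp, ∀ c : Fin N → Fin m,
      condExpKernel μp (coordAlg S') x {z : Conf ℓ m | ∀ g ∈ Tf, z g = rep c g}
        = μp {z : Conf ℓ m | ∀ g ∈ Tf, z g = rep c g} := by
    rw [ae_all_iff]
    intro c
    exact condexpKernel_indep_cyl hμp Tf hdisjT (rep c)
  filter_upwards [ae_part2, ae_atomS', ae_cyl] with x h2 h1 hcyl
  -- identify the relevant cylinder
  set cx : Fin N → Fin m := fun i => x ((FreeGroup.of a) ^ (i : ℕ)) with hcx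
  have hrepx : ∀ g ∈ Tf, rep cx g = x g := by
    intro g hg
    rw [hTf] at hg
    obtain ⟨i, hi, rfl⟩ := Finset.mem_image.mp hg
    have hi' : i < N := Finset.mem_range.mp hi
    exact Function.Injective.extend_apply hfin_inj cx (fun _ => cx ⟨0, hN⟩) ⟨i, hi'⟩
  set Bx := {z : Conf ℓ m | ∀ g ∈ Tf, z g = x g} with hBx
  have hBeq : {z : Conf ℓ m | ∀ g ∈ Tf, z g = rep cx g} = Bx := by
    ext z
    simp only [hBx, Set.mem_setOf_eq]
    exact forall₂_congr fun g hg => by rw [hrepx g hg]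
  have hkerB : condExpKernel μp (coordAlg S') x Bx = μp Bx := by
    have := hcyl cx
    rwa [hBeq] at this
  -- atom splitting
  have hatom_split : atomOn (Wa a) x = atomOn S' x ∩ Bx := by
    ext y
    simp only [atomOn, Set.mem_setOf_eq, Set.mem_inter_iff, hBx]
    constructor
    · intro hy
      constructor
      · intro g hg; exact hy g hg.1
      · intro g hg
        have hgT : g ∈ Tset := by rw [← hTfset]; exact Finset.mem_coe.mpr hg
        exact hy g (hTsub hgT)
    · rintro ⟨hy1, hy2⟩ g hg
      by_cases hgT : g ∈ Tset
      · refine hy2 g ?_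
        rw [← hTfset] at hgT
        exact Finset.mem_coe.mp hgT
      · exact hy1 g ⟨hg, hgT⟩
  -- the kernel of the full atom equals the kernel of Bx
  have hker_atom : condExpKernel μp (coordAlg S') x (atomOn (Wa a) x) = μp Bx := by
    rw [hatom_split]
    haveI : IsProbabilityMeasure (condExpKernel μp (coordAlg S') x) := inferInstance
    have hA1 : condExpKernel μp (coordAlg S') x ((atomOn S' x)ᶜ) = 0 :=
      (prob_compl_eq_zero_iff (measurableSet_atomOn S' x)).mpr h1
    have hle : condExpKernel μp (coordAlg S') x Bx
        ≤ condExpKernel μp (coordAlg S') x (atomOn S' x ∩ Bx) := by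
      have hsub : Bx ⊆ (atomOn S' x ∩ Bx) ∪ (atomOn S' x)ᶜ := by
        intro z hz
        by_cases hzA : z ∈ atomOn S' x
        · exact Or.inl ⟨hzA, hz⟩
        · exact Or.inr hzA
      calc condExpKernel μp (coordAlg S') x Bx
          ≤ condExpKernel μp (coordAlg S') x ((atomOn S' x ∩ Bx) ∪ (atomOn S' x)ᶜ) :=
            measure_mono hsub
        _ ≤ condExpKernel μp (coordAlg S') x (atomOn S' x ∩ Bx)
            + condExpKernel μp (coordAlg S') x ((atomOn S' x)ᶜ) := measure_union_le _ _
        _ = condExpKernel μp (coordAlg S') x (atomOn S' x ∩ Bx) := by rw [hA1, add_zero]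
    have hge : condExpKernel μp (coordAlg S') x (atomOn S' x ∩ Bx)
        ≤ condExpKernel μp (coordAlg S') x Bx := measure_mono Set.inter_subset_right
    rw [le_antisymm hge hle, hkerB]
  -- value of μp Bx
  have hBval : (μp Bx).toReal = ∏ i ∈ Finset.range N, P (x ((FreeGroup.of a) ^ i)) := by
    rw [hBx, hμp.2 Tf x, hTf]
    rw [Finset.prod_image (fun i _ j _ h => hpow_inj h)]
  have hsum : -Real.log ((μp Bx).toReal)
      = ∑ i ∈ Finset.range N, -Real.log (P (x ((FreeGroup.of a) ^ i))) := by
    rw [hBval, Real.log_prod (fun i _ => (hP _).ne'), ← Finset.sum_neg_distrib]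
  -- first conjunct
  have hfirst : condInfo μp (coordAlg (Wa a \ {g | ∃ i < N, g = (FreeGroup.of a) ^ i}))
      (atomOn (Wa a) x) x
      = ∑ i ∈ Finset.range N, -Real.log (P (x ((FreeGroup.of a) ^ i))) := by
    have hcp : condProb μp (coordAlg S') (atomOn (Wa a) x) x
        = condExpKernel μp (coordAlg S') x (atomOn (Wa a) x) := rfl
    rw [show (Wa a \ {g | ∃ i < N, g = (FreeGroup.of a) ^ i}) = S' from rfl]
    rw [condInfo, hcp, hker_atom, hsum]
  -- second conjunct
  have hsecond : condInfo μp (pastAlg a)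
      (atomOn (Wa a \ {g | ∃ i < N, g = (FreeGroup.of a) ^ i}) x) x = 0 := by
    have hcp : condProb μp (pastAlg a)
        (atomOn (Wa a \ {g | ∃ i < N, g = (FreeGroup.of a) ^ i}) x) x
        = condExpKernel μp (coordAlg (Wa a)) x (atomOn S' x) := rfl
    rw [condInfo, hcp, h2]
    simp
  exact ⟨hfirst, hsecond, by rw [hfirst, hsecond, sub_zero]⟩

end Finitary
end
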